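/- Let S be a type of states with transition relations T_c, T_u : S → S → Prop, initial states I : Set S and safe states P : Set S. Define Bad = {s : S | ∃ t, t ∉ P ∧ ReflTransGen T_u s t}. Let T^S : S → S → Prop be a safe supervisor, i.e. T_u s t → T^S s t, T^S s t → (T_c s t ∨ T_u s t), and every state reachable from I under T^S lies in P. Then no state reachable from I under T^S lies in Bad. -/

import Mathlib

theorem pdrc_safe_supervisor_avoids_bad {S : Type*} (Tc Tu : S → S → Prop)
    (I P : Set S) (Bad : Set S)
    (hBad : Bad = {s : S | ∃ t, t ∉ P ∧ Relation.ReflTransGen Tu s t})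
    (TS : S → S → Prop)
    (hTuTS : ∀ s t, Tu s t → TS s t)
    (hTSsub : ∀ s t, TS s t → (Tc s t ∨ Tu s t))
    (hsafe : ∀ t : S, (∃ s ∈ I, Relation.ReflTransGen TS s t) → t ∈ P) :
    ∀ t : S, (∃ s ∈ I, Relation.ReflTransGen TS s t) → t ∉ Bad := by
  rintro t ⟨s, hs, hst⟩ hbad
  rw [hBad] at hbad
  obtain ⟨u, hu, htu⟩ := hbad
  exact hu (hsafe u ⟨s, hs, hst.trans (Relation.ReflTransGen.mono (fun a b => hTuTS a b) t u htu)⟩)
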